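/- Let G be a simple graph on n vertices with m edges, minimum degree δ ≥ 1 and maximum degree Δ ≤ n − 2, and let p ≠ 0 be a real number. Let ξ_1 be the largest eigenvalue of the p-Sombor matrix S_p(G) and ξ̄_1 the largest eigenvalue of the p-Sombor matrix S_p(Ḡ) of the complement Ḡ of G. Then ξ_1 + ξ̄_1 ≥ (2^{1+1/p} / n) · ( m δ + (n − 1 − Δ)( C(n,2) − m ) ), where C(n,2) = n(n−1)/2. -/

import Mathlib

open Finset

/-- The `p`-Sombor matrix of a simple graph `G` on vertices `{0, …, n-1}`:
its `(i,j)` entry is `((d i)^p + (d j)^p)^(1/p)` when `i ~ j`, and `0` otherwise. -/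
noncomputable def somborMatrix (n : ℕ) (G : SimpleGraph (Fin n)) [DecidableRel G.Adj]
    (p : ℝ) : Matrix (Fin n) (Fin n) ℝ :=
  Matrix.of fun i j =>
    if G.Adj i j then ((G.degree i : ℝ) ^ p + (G.degree j : ℝ) ^ p) ^ (1 / p) else 0

/-- Sum of a symmetric weight `f` over the edges of `G`
(each unordered edge counted once). -/
noncomputable def edgeSum (n : ℕ) (G : SimpleGraph (Fin n)) [DecidableRel G.Adj]
    (f : Fin n → Fin n → ℝ) : ℝ :=
  (1 / 2) * ∑ i, ∑ j, if G.Adj i j then f i j else 0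

/-- The `p`-Sombor index `SO_p(G) = ∑_{ij ∈ E(G)} ((d i)^p + (d j)^p)^(1/p)`. -/
noncomputable def somborIndex (n : ℕ) (G : SimpleGraph (Fin n)) [DecidableRel G.Adj]
    (p : ℝ) : ℝ :=
  edgeSum n G fun i j => ((G.degree i : ℝ) ^ p + (G.degree j : ℝ) ^ p) ^ (1 / p)

open Matrix

private lemma aux_rpow {a x y p : ℝ} (hp : p ≠ 0) (ha : 0 < a) (hx : a ≤ x) (hy : a ≤ y) :
    (2:ℝ) ^ (1/p) * a ≤ (x ^ p + y ^ p) ^ (1/p) := by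
  have hx0 : 0 < x := ha.trans_le hx
  have hy0 : 0 < y := ha.trans_le hy
  have h2 : (2:ℝ) ^ (1/p) * a = (a ^ p + a ^ p) ^ (1/p) := by
    have : a ^ p + a ^ p = 2 * a ^ p := by ring
    rw [this, Real.mul_rpow (by norm_num) (Real.rpow_nonneg ha.le p),
      ← Real.rpow_mul ha.le, mul_one_div_cancel hp, Real.rpow_one]
  rw [h2]
  rcases hp.lt_or_gt with hneg | hpos
  · have h1 : x ^ p ≤ a ^ p := Real.rpow_le_rpow_of_nonpos ha hx hneg.le
    have h2' : y ^ p ≤ a ^ p := Real.rpow_le_rpow_of_nonpos ha hy hneg.le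
    exact Real.rpow_le_rpow_of_nonpos
      (by positivity) (by linarith) (by
        exact div_nonpos_of_nonneg_of_nonpos zero_le_one hneg.le)
  · have h1 : a ^ p ≤ x ^ p := Real.rpow_le_rpow ha.le hx hpos.le
    have h2' : a ^ p ≤ y ^ p := Real.rpow_le_rpow ha.le hy hpos.le
    exact Real.rpow_le_rpow (by positivity) (by linarith) (by positivity)

private lemma rayleigh_le {n : ℕ} (A : Matrix (Fin n) (Fin n) ℝ) (hA : A.IsHermitian) (ξ : ℝ)
    (hmax : ∀ i, hA.eigenvalues i ≤ ξ) (x : Fin n → ℝ) :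
    x ⬝ᵥ A.mulVec x ≤ ξ * (x ⬝ᵥ x) := by
  set U : Matrix (Fin n) (Fin n) ℝ := (hA.eigenvectorUnitary : Matrix (Fin n) (Fin n) ℝ) with hUdef
  have hU : U * star U = 1 := (Matrix.mem_unitaryGroup_iff).mp hA.eigenvectorUnitary.2
  have key : ξ • (1 : Matrix (Fin n) (Fin n) ℝ) - A
      = U * Matrix.diagonal (fun i => ξ - hA.eigenvalues i) * star U := by
    have hdiag : Matrix.diagonal (fun i => ξ - hA.eigenvalues i)
        = ξ • (1 : Matrix (Fin n) (Fin n) ℝ)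
          - Matrix.diagonal (RCLike.ofReal ∘ hA.eigenvalues) := by
      ext i j
      by_cases h : i = j <;> simp [Matrix.diagonal_apply, Matrix.one_apply, h]
    rw [hdiag, Matrix.mul_sub, Matrix.sub_mul]
    congr 1
    · rw [Matrix.mul_smul, mul_one, Matrix.smul_mul, hU]
    · exact hA.spectral_theorem
  have hPSD : (ξ • (1 : Matrix (Fin n) (Fin n) ℝ) - A).PosSemidef := by
    rw [key]
    have := (Matrix.posSemidef_diagonal_iff.mpr
      fun i => sub_nonneg.mpr (hmax i)).mul_mul_conjTranspose_same U
    simpa [Matrix.star_eq_conjTranspose] using this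
  have h0 := hPSD.dotProduct_mulVec_nonneg x
  rw [star_trivial, Matrix.sub_mulVec, Matrix.smul_mulVec, Matrix.one_mulVec,
    dotProduct_sub, dotProduct_smul, smul_eq_mul] at h0
  linarith

private lemma graph_bound {n : ℕ} (G : SimpleGraph (Fin n)) [DecidableRel G.Adj]
    (p : ℝ) (hp : p ≠ 0)
    (hH : (somborMatrix n G p).IsHermitian) (ξ : ℝ)
    (hmax : ∀ i, hH.eigenvalues i ≤ ξ)
    (a : ℝ) (ha : 0 < a) (hdeg : ∀ v, a ≤ (G.degree v : ℝ)) :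
    (2:ℝ) ^ (1/p) * a * (2 * (G.edgeFinset.card : ℝ)) ≤ (n : ℝ) * ξ := by
  have hray := rayleigh_le (somborMatrix n G p) hH ξ hmax (fun _ : Fin n => 1)
  have hxx : (fun _ : Fin n => (1:ℝ)) ⬝ᵥ (fun _ : Fin n => (1:ℝ)) = (n : ℝ) := by
    simp [dotProduct]
  have hAx : (fun _ : Fin n => (1:ℝ)) ⬝ᵥ (somborMatrix n G p).mulVec (fun _ : Fin n => 1)
      = ∑ i, ∑ j, somborMatrix n G p i j := by
    simp [dotProduct, Matrix.mulVec]
  rw [hxx, hAx] at hray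
  have hstep : ∀ i : Fin n, ∑ j, (if G.Adj i j then (2:ℝ) ^ (1/p) * a else 0)
      ≤ ∑ j, somborMatrix n G p i j := by
    intro i
    refine Finset.sum_le_sum fun j _ => ?_
    by_cases h : G.Adj i j
    · simp only [h, if_true, somborMatrix, Matrix.of_apply]
      exact aux_rpow hp ha (hdeg i) (hdeg j)
    · simp [somborMatrix, h]
  have hcount : ∀ i : Fin n, ∑ j, (if G.Adj i j then (2:ℝ) ^ (1/p) * a else 0)
      = (G.degree i : ℝ) * ((2:ℝ) ^ (1/p) * a) := by
    intro i
    rw [Finset.sum_ite, Finset.sum_const_zero, add_zero, Finset.sum_const,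
      nsmul_eq_mul]
    congr 2
    rw [SimpleGraph.degree, SimpleGraph.neighborFinset_eq_filter]
  have hsum1 : (2:ℝ) ^ (1/p) * a * (2 * (G.edgeFinset.card : ℝ))
      = ∑ i, (G.degree i : ℝ) * ((2:ℝ) ^ (1/p) * a) := by
    rw [← Finset.sum_mul, ← Nat.cast_sum, G.sum_degrees_eq_twice_card_edges]
    push_cast; ring
  have hsum2 : ∑ i, (G.degree i : ℝ) * ((2:ℝ) ^ (1/p) * a)
      ≤ ∑ i, ∑ j, somborMatrix n G p i j := by
    refine Finset.sum_le_sum fun i _ => ?_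
    rw [← hcount i]; exact hstep i
  linarith


/-- For a graph with `m` edges, `δ ≥ 1` and `Δ ≤ n − 2`, if `ξ₁` and `ξ̄₁`
are the largest eigenvalues of `S_p(G)` and `S_p(Ḡ)` respectively, then
`ξ₁ + ξ̄₁ ≥ (2^(1+1/p)/n) (m δ + (n − 1 − Δ)(n(n−1)/2 − m))`. -/
theorem somborMatrix_nordhaus_gaddum (n : ℕ) (G : SimpleGraph (Fin n))
    [DecidableRel G.Adj] (hδ : 1 ≤ G.minDegree) (hΔ : G.maxDegree ≤ n - 2)
    (p : ℝ) (hp : p ≠ 0)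
    (hS : (somborMatrix n G p).IsHermitian) (hSc : (somborMatrix n Gᶜ p).IsHermitian)
    (ξ₁ ξc₁ : ℝ)
    (hξmem : ∃ i, hS.eigenvalues i = ξ₁) (hξmax : ∀ i, hS.eigenvalues i ≤ ξ₁)
    (hξcmem : ∃ i, hSc.eigenvalues i = ξc₁) (hξcmax : ∀ i, hSc.eigenvalues i ≤ ξc₁) :
    (2 : ℝ) ^ (1 + 1 / p) / (n : ℝ) *
        ((G.edgeFinset.card : ℝ) * (G.minDegree : ℝ) +
          ((n : ℝ) - 1 - (G.maxDegree : ℝ)) *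
            ((n : ℝ) * ((n : ℝ) - 1) / 2 - (G.edgeFinset.card : ℝ))) ≤ ξ₁ + ξc₁ := by
  -- basic facts about n
  have hn0 : n ≠ 0 := by
    rintro rfl
    rw [SimpleGraph.minDegree] at hδ
    simp at hδ
  haveI : Nonempty (Fin n) := ⟨⟨0, Nat.pos_of_ne_zero hn0⟩⟩
  obtain ⟨v₀⟩ : Nonempty (Fin n) := inferInstance
  have hdv : 1 ≤ G.degree v₀ := le_trans hδ (G.minDegree_le_degree v₀)
  have hdlt : G.degree v₀ < n := by
    simpa using G.degree_lt_card_verts v₀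
  have hn2 : 2 ≤ n := by omega
  have hΔn : G.maxDegree + 2 ≤ n := by omega
  -- degree bounds
  have hdegG : ∀ v, (G.minDegree : ℝ) ≤ (G.degree v : ℝ) := fun v =>
    Nat.cast_le.mpr (G.minDegree_le_degree v)
  have hδpos : (0:ℝ) < (G.minDegree : ℝ) := by exact_mod_cast hδ
  have hcompl_deg : ∀ v : Fin n, Gᶜ.degree v = n - 1 - G.degree v := by
    intro v
    rw [SimpleGraph.degree_compl]
    simp
  have hdegle : ∀ v, G.degree v ≤ G.maxDegree := fun v => G.degree_le_maxDegree v
  have hdegGc : ∀ v, ((n:ℝ) - 1 - (G.maxDegree : ℝ)) ≤ (Gᶜ.degree v : ℝ) := by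
    intro v
    have h1 : n - 1 - G.maxDegree ≤ Gᶜ.degree v := by
      rw [hcompl_deg v]; have := hdegle v; omega
    have h2 : ((n - 1 - G.maxDegree : ℕ) : ℝ) = (n:ℝ) - 1 - (G.maxDegree : ℝ) := by
      have : n - 1 - G.maxDegree = n - (1 + G.maxDegree) := by omega
      rw [this, Nat.cast_sub (by omega)]
      push_cast; ring
    rw [← h2]
    exact_mod_cast h1
  have hapos : (0:ℝ) < (n:ℝ) - 1 - (G.maxDegree : ℝ) := by
    have : (G.maxDegree : ℝ) + 2 ≤ (n:ℝ) := by exact_mod_cast hΔn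
    linarith
  -- edge counts
  have hedgec : 2 * Gᶜ.edgeFinset.card + 2 * G.edgeFinset.card = n * (n - 1) := by
    have h1 : ∑ v, Gᶜ.degree v = 2 * Gᶜ.edgeFinset.card :=
      Gᶜ.sum_degrees_eq_twice_card_edges
    have h2 : ∑ v, G.degree v = 2 * G.edgeFinset.card :=
      G.sum_degrees_eq_twice_card_edges
    have h3 : ∑ v, (Gᶜ.degree v + G.degree v) = ∑ v : Fin n, (n - 1) := by
      refine Finset.sum_congr rfl fun v _ => ?_
      rw [hcompl_deg v]
      have h4 : G.degree v < n := by simpa using G.degree_lt_card_verts v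
      omega
    rw [Finset.sum_add_distrib, h1, h2] at h3
    simpa [Finset.sum_const, Finset.card_univ, mul_comm] using h3
  have hedgecR : (Gᶜ.edgeFinset.card : ℝ)
      = (n:ℝ) * ((n:ℝ) - 1) / 2 - (G.edgeFinset.card : ℝ) := by
    have := congrArg (fun k : ℕ => (k : ℝ)) hedgec
    push_cast [Nat.cast_sub (by omega : 1 ≤ n)] at this
    linarith
  -- apply the spectral bounds
  have hb1 := graph_bound G p hp hS ξ₁ hξmax (G.minDegree : ℝ) hδpos hdegG
  have hb2 := graph_bound Gᶜ p hp hSc ξc₁ hξcmax ((n:ℝ) - 1 - (G.maxDegree : ℝ))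
    hapos hdegGc
  rw [hedgecR] at hb2
  -- final algebra
  have h2pow : (2:ℝ) ^ (1 + 1/p) = 2 * (2:ℝ) ^ (1/p) := by
    rw [Real.rpow_add (by norm_num), Real.rpow_one]
  have hnpos : (0:ℝ) < (n:ℝ) := by exact_mod_cast Nat.pos_of_ne_zero hn0
  rw [h2pow, div_mul_eq_mul_div, div_le_iff₀ hnpos]
  nlinarith [hb1, hb2]
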